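/- For every integer n ≥ 3, the variance of D under a uniformly random triangulation of P_n equals 2(2n−3)(n−2)(n−3) / (n²(n+1)); that is, as an identity of rational numbers, (1/C_{n−2}) · ∑_T D(T)² − ( (1/C_{n−2}) · ∑_T D(T) )² = 2(2n−3)(n−2)(n−3) / (n²(n+1)), the sums ranging over all triangulations T of P_n. -/

import Mathlib

open Finset
open scoped Classical

/-- `IsDiag l r i j` : the pair `{i, j}` (written with `i < j`) is a diagonal of the
convex sub-polygon on vertices `{l, …, r}`. -/
def IsDiag (l r i j : ℕ) : Prop :=
  l ≤ i ∧ i + 2 ≤ j ∧ j ≤ r ∧ ¬(i = l ∧ j = r)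

/-- Two diagonals `{a, b}` and `{c, d}` (written with `a < b`, `c < d`) cross. -/
def Crosses (a b c d : ℕ) : Prop :=
  (a < c ∧ c < b ∧ b < d) ∨ (c < a ∧ a < d ∧ d < b)

/-- All diagonals of the sub-polygon on `{l, …, r}`, as ordered pairs. -/
noncomputable def allDiags (l r : ℕ) : Finset (ℕ × ℕ) :=
  (range (r + 1) ×ˢ range (r + 1)).filter fun p => IsDiag l r p.1 p.2

/-- The triangulations of the sub-polygon on `{l, …, r}` : sets of `r - l - 2`
pairwise noncrossing diagonals. -/
noncomputable def triangulations (l r : ℕ) : Finset (Finset (ℕ × ℕ)) :=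
  (allDiags l r).powerset.filter fun T =>
    T.card = r - l - 2 ∧ ∀ d ∈ T, ∀ e ∈ T, ¬ Crosses d.1 d.2 e.1 e.2

/-- `IsEdge l r i j` : the pair `{i, j}` (with `i < j`) is an edge (boundary side) of the
sub-polygon on `{l, …, r}`. -/
def IsEdge (l r i j : ℕ) : Prop :=
  (l ≤ i ∧ j = i + 1 ∧ j ≤ r) ∨ (i = l ∧ j = r)

/-- `{i, j}` is a side available in the triangulation `T` (an edge of the polygon or a
diagonal of `T`). -/
def IsSide (l r : ℕ) (T : Finset (ℕ × ℕ)) (i j : ℕ) : Prop :=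
  IsEdge l r i j ∨ (i, j) ∈ T

/-- The triangles of a triangulation `T` of the sub-polygon on `{l, …, r}`, as ordered
triples `(a, b, c)` with `a < b < c`, each of whose three sides is an edge or a diagonal
of `T`. -/
noncomputable def triangles (l r : ℕ) (T : Finset (ℕ × ℕ)) : Finset (ℕ × ℕ × ℕ) :=
  (range (r + 1) ×ˢ range (r + 1) ×ˢ range (r + 1)).filter fun t =>
    t.1 < t.2.1 ∧ t.2.1 < t.2.2 ∧
      IsSide l r T t.1 t.2.1 ∧ IsSide l r T t.2.1 t.2.2 ∧ IsSide l r T t.1 t.2.2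

/-- The number of sides of the triangle `{a, b, c}` (with `a < b < c`) that are edges of
the sub-polygon on `{l, …, r}`. -/
noncomputable def edgeCount (l r a b c : ℕ) : ℕ :=
  (if IsEdge l r a b then 1 else 0) + (if IsEdge l r b c then 1 else 0) +
    (if IsEdge l r a c then 1 else 0)

/-- `O(T)` : the number of triangles of `T` with exactly one side an edge of `P_n`. -/
noncomputable def oneSideCount (n : ℕ) (T : Finset (ℕ × ℕ)) : ℕ :=
  ((triangles 1 n T).filter fun t => edgeCount 1 n t.1 t.2.1 t.2.2 = 1).card

/-- `Ear(T)` : the number of triangles of `T` with at least two sides edges of `P_n`. -/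
noncomputable def earCount (n : ℕ) (T : Finset (ℕ × ℕ)) : ℕ :=
  ((triangles 1 n T).filter fun t => 2 ≤ edgeCount 1 n t.1 t.2.1 t.2.2).card

/-- `D(T)` : the number of triangles of `T` containing vertex `1`. -/
noncomputable def degOne (n : ℕ) (T : Finset (ℕ × ℕ)) : ℕ :=
  ((triangles 1 n T).filter fun t => t.1 = 1 ∨ t.2.1 = 1 ∨ t.2.2 = 1).card

/-- `B(T)` : the number of triangles `{l, j, r}` of `T` (with `l < j < r`) such that
`j - l = 1`. -/
noncomputable def blueCount (n : ℕ) (T : Finset (ℕ × ℕ)) : ℕ :=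
  ((triangles 1 n T).filter fun t => t.2.1 - t.1 = 1).card

/-- `A_i(T)` : the number of triangles `{1, a, b}` of `T` containing vertex `1`
(written with `1 < a < b`) such that `b - a = i`. -/
noncomputable def angleCount (n : ℕ) (T : Finset (ℕ × ℕ)) (i : ℕ) : ℕ :=
  ((triangles 1 n T).filter fun t => t.1 = 1 ∧ t.2.2 - t.2.1 = i).card

lemma mem_allDiags {l r : ℕ} {p : ℕ × ℕ} :
    p ∈ allDiags l r ↔ IsDiag l r p.1 p.2 := by
  unfold allDiags
  rw [mem_filter]
  simp only [allDiags, mem_filter, mem_product, mem_range, IsDiag]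
  omega

lemma mem_triangulations {l r : ℕ} {T : Finset (ℕ × ℕ)} :
    T ∈ triangulations l r ↔
      T ⊆ allDiags l r ∧ T.card = r - l - 2 ∧
        ∀ p ∈ T, ∀ q ∈ T, ¬ Crosses p.1 p.2 q.1 q.2 := by
  simp only [triangulations, mem_filter, mem_powerset, and_assoc]

lemma diag_of_mem {l r : ℕ} {T : Finset (ℕ × ℕ)} (hT : T ∈ triangulations l r)
    {p : ℕ × ℕ} (hp : p ∈ T) :
    l ≤ p.1 ∧ p.1 + 2 ≤ p.2 ∧ p.2 ≤ r ∧ ¬(p.1 = l ∧ p.2 = r) :=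
  mem_allDiags.mp ((mem_triangulations.mp hT).1 hp)

lemma noncross_card_le :
    ∀ (n l r : ℕ) (S : Finset (ℕ × ℕ)), S.card ≤ n →
      (∀ p ∈ S, IsDiag l r p.1 p.2) →
      (∀ p ∈ S, ∀ q ∈ S, ¬ Crosses p.1 p.2 q.1 q.2) →
      S.card ≤ r - l - 2 := by
  intro n
  induction n with
  | zero => intro l r S h _ _; omega
  | succ n IH =>
    intro l r S hcard hdiag hcross
    rcases S.eq_empty_or_nonempty with rfl | hne
    · simp
    obtain ⟨ab, habS, hmax⟩ := S.exists_max_image (fun p => p.2 - p.1) hne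
    obtain ⟨a, b⟩ := ab
    have hab : IsDiag l r a b := hdiag _ habS
    set S0 : Finset (ℕ × ℕ) := S.erase (a, b) with hS0
    have hS0card : S0.card = S.card - 1 := card_erase_of_mem habS
    have hS0n : S0.card ≤ n := by
      have := hne.card_pos
      omega
    set S1 : Finset (ℕ × ℕ) := S0.filter (fun p => p.2 ≤ a) with hS1
    set S2 : Finset (ℕ × ℕ) := S0.filter (fun p => a ≤ p.1 ∧ p.2 ≤ b) with hS2
    set S3 : Finset (ℕ × ℕ) := S0.filter (fun p => b ≤ p.1) with hS3
    have hfacts : ∀ p ∈ S0, IsDiag l r p.1 p.2 ∧ ¬(p.1 = a ∧ p.2 = b) ∧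
        p.2 - p.1 ≤ b - a ∧ ¬ Crosses p.1 p.2 a b ∧ ¬ Crosses a b p.1 p.2 := by
      intro p hp
      have hpS : p ∈ S := mem_of_mem_erase hp
      refine ⟨hdiag _ hpS, ?_, hmax _ hpS, hcross _ hpS _ habS, hcross _ habS _ hpS⟩
      rintro ⟨h1, h2⟩
      exact (ne_of_mem_erase hp) (Prod.ext h1 h2)
    have hcover : S0 ⊆ S1 ∪ S2 ∪ S3 := by
      intro p hp
      obtain ⟨hd, hne', hm, hc1, hc2⟩ := hfacts p hp
      unfold IsDiag at hd hab
      unfold Crosses at hc1 hc2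
      have h3 : p.2 ≤ a ∨ (a ≤ p.1 ∧ p.2 ≤ b) ∨ b ≤ p.1 := by omega
      rcases h3 with h | h | h
      · exact mem_union_left _ (mem_union_left _ (mem_filter.mpr ⟨hp, h⟩))
      · exact mem_union_left _ (mem_union_right _ (mem_filter.mpr ⟨hp, h⟩))
      · exact mem_union_right _ (mem_filter.mpr ⟨hp, h⟩)
    have hsubcross : ∀ X : Finset (ℕ × ℕ), X ⊆ S →
        ∀ p ∈ X, ∀ q ∈ X, ¬ Crosses p.1 p.2 q.1 q.2 :=
      fun X hX p hp q hq => hcross p (hX hp) q (hX hq)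
    have hS0S : S0 ⊆ S := erase_subset _ _
    have hS1S0 : S1 ⊆ S0 := filter_subset _ _
    have hS2S0 : S2 ⊆ S0 := filter_subset _ _
    have hS3S0 : S3 ⊆ S0 := filter_subset _ _
    have hb1 : S1.card ≤ a - l - 1 := by
      by_cases hal : l + 2 ≤ a
      · have hsub : ∀ p ∈ S1.erase (l, a), IsDiag l a p.1 p.2 := by
          intro p hp
          have hpn : ¬(p.1 = l ∧ p.2 = a) := by
            rintro ⟨h1, h2⟩; exact (ne_of_mem_erase hp) (Prod.ext h1 h2)
          have hp1 : p ∈ S1 := mem_of_mem_erase hp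
          have hple : p.2 ≤ a := (mem_filter.mp hp1).2
          have hd := (hfacts p (hS1S0 hp1)).1
          unfold IsDiag at hd ⊢
          omega
        have hcard1 : (S1.erase (l, a)).card ≤ n :=
          le_trans (card_le_card (fun p hp => hS1S0 (mem_of_mem_erase hp))) hS0n
        have hIH := IH l a _ hcard1 hsub
          (hsubcross _ (fun p hp => hS0S (hS1S0 (mem_of_mem_erase hp))))
        have hle : S1.card ≤ (S1.erase (l, a)).card + 1 := by
          by_cases hm : (l, a) ∈ S1
          · rw [card_erase_of_mem hm]
            have := card_pos.mpr ⟨_, hm⟩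
            omega
          · rw [erase_eq_of_notMem hm]; omega
        omega
      · have : S1 = ∅ := by
          refine eq_empty_of_forall_notMem fun p hp => ?_
          rw [hS1, mem_filter] at hp
          have hd := (hfacts p hp.1).1
          have := hp.2
          unfold IsDiag at hd; omega
        rw [this]; simp
    have hb3 : S3.card ≤ r - b - 1 := by
      by_cases hbr : b + 2 ≤ r
      · have hsub : ∀ p ∈ S3.erase (b, r), IsDiag b r p.1 p.2 := by
          intro p hp
          have hpn : ¬(p.1 = b ∧ p.2 = r) := by
            rintro ⟨h1, h2⟩; exact (ne_of_mem_erase hp) (Prod.ext h1 h2)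
          have hp1 : p ∈ S3 := mem_of_mem_erase hp
          have hple : b ≤ p.1 := (mem_filter.mp hp1).2
          have hd := (hfacts p (hS3S0 hp1)).1
          unfold IsDiag at hd ⊢
          omega
        have hcard1 : (S3.erase (b, r)).card ≤ n :=
          le_trans (card_le_card (fun p hp => hS3S0 (mem_of_mem_erase hp))) hS0n
        have hIH := IH b r _ hcard1 hsub
          (hsubcross _ (fun p hp => hS0S (hS3S0 (mem_of_mem_erase hp))))
        have hle : S3.card ≤ (S3.erase (b, r)).card + 1 := by
          by_cases hm : (b, r) ∈ S3
          · rw [card_erase_of_mem hm]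
            have := card_pos.mpr ⟨_, hm⟩
            omega
          · rw [erase_eq_of_notMem hm]; omega
        omega
      · have : S3 = ∅ := by
          refine eq_empty_of_forall_notMem fun p hp => ?_
          rw [hS3, mem_filter] at hp
          have hd := (hfacts p hp.1).1
          have := hp.2
          unfold IsDiag at hd; omega
        rw [this]; simp
    have hb2 : S2.card ≤ b - a - 2 := by
      have hsub : ∀ p ∈ S2, IsDiag a b p.1 p.2 := by
        intro p hp
        rw [hS2, mem_filter] at hp
        obtain ⟨hd, hne', _, _, _⟩ := hfacts p hp.1
        have := hp.2
        unfold IsDiag at hd ⊢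
        omega
      exact IH a b _ (le_trans (card_le_card hS2S0) hS0n) hsub
        (hsubcross _ (fun p hp => hS0S (hS2S0 hp)))
    have hu : S0.card ≤ S1.card + S2.card + S3.card :=
      le_trans (card_le_card hcover)
        (le_trans (card_union_le _ _) (by
          have := card_union_le S1 S2
          omega))
    unfold IsDiag at hab
    have := hne.card_pos
    omega

noncomputable def extras (l k r : ℕ) : Finset (ℕ × ℕ) :=
  (if l + 2 ≤ k then {(l, k)} else ∅) ∪ (if k + 2 ≤ r then {(k, r)} else ∅)

noncomputable def glue (l k r : ℕ) (L R : Finset (ℕ × ℕ)) : Finset (ℕ × ℕ) :=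
  (L ∪ R) ∪ extras l k r

lemma mem_glue {l k r : ℕ} {L R : Finset (ℕ × ℕ)} {p : ℕ × ℕ} :
    p ∈ glue l k r L R ↔
      p ∈ L ∨ p ∈ R ∨ (p = (l, k) ∧ l + 2 ≤ k) ∨ (p = (k, r) ∧ k + 2 ≤ r) := by
  unfold glue extras
  split_ifs with h1 h2 <;> simp [mem_union] <;> tauto

noncomputable def leftPart (l k : ℕ) (T : Finset (ℕ × ℕ)) : Finset (ℕ × ℕ) :=
  (T.filter fun p => p.2 ≤ k).erase (l, k)

noncomputable def rightPart (k r : ℕ) (T : Finset (ℕ × ℕ)) : Finset (ℕ × ℕ) :=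
  (T.filter fun p => k ≤ p.1).erase (k, r)

noncomputable def apex (l : ℕ) (T : Finset (ℕ × ℕ)) : ℕ :=
  (insert (l + 1) ((T.filter fun p => p.1 = l).image Prod.snd)).max' (insert_nonempty _ _)

lemma le_apex {l : ℕ} {T : Finset (ℕ × ℕ)} : l + 1 ≤ apex l T :=
  le_max' _ _ (mem_insert_self _ _)

lemma apex_le {l j : ℕ} {T : Finset (ℕ × ℕ)} (h : (l, j) ∈ T) : j ≤ apex l T := by
  apply le_max'
  exact mem_insert_of_mem (mem_image.mpr ⟨(l, j), mem_filter.mpr ⟨h, rfl⟩, rfl⟩)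

lemma apex_cases (l : ℕ) (T : Finset (ℕ × ℕ)) :
    apex l T = l + 1 ∨ (l, apex l T) ∈ T := by
  have h := max'_mem (insert (l + 1) ((T.filter fun p => p.1 = l).image Prod.snd))
    (insert_nonempty _ _)
  rw [mem_insert] at h
  rcases h with h | h
  · exact Or.inl h
  · right
    obtain ⟨p, hp, hp2⟩ := mem_image.mp h
    rw [mem_filter] at hp
    have hpe : p = (l, apex l T) := Prod.ext hp.2 hp2
    rw [← hpe]
    exact hp.1
    
lemma card_glue_aux {l k r : ℕ} {L R : Finset (ℕ × ℕ)} (hk1 : l + 1 ≤ k) (hk2 : k + 1 ≤ r)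
    (hL : ∀ p ∈ L, IsDiag l k p.1 p.2) (hR : ∀ p ∈ R, IsDiag k r p.1 p.2) :
    (glue l k r L R).card
      = L.card + R.card + ((if l + 2 ≤ k then 1 else 0) + (if k + 2 ≤ r then 1 else 0)) := by
  have hLb : ∀ p ∈ L, l ≤ p.1 ∧ p.1 + 2 ≤ p.2 ∧ p.2 ≤ k ∧ ¬(p.1 = l ∧ p.2 = k) := hL
  have hRb : ∀ p ∈ R, k ≤ p.1 ∧ p.1 + 2 ≤ p.2 ∧ p.2 ≤ r ∧ ¬(p.1 = k ∧ p.2 = r) := hR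
  have hd1 : Disjoint L R := by
    rw [disjoint_left]
    intro p hpL hpR
    have := hLb p hpL
    have := hRb p hpR
    omega
  have hd2 : Disjoint (L ∪ R) (extras l k r) := by
    rw [disjoint_right]
    intro p hpE hpU
    have hpE' : (p = (l, k) ∧ l + 2 ≤ k) ∨ (p = (k, r) ∧ k + 2 ≤ r) := by
      unfold extras at hpE
      rcases mem_union.mp hpE with h | h <;> [left; right] <;>
        (constructor
         · by_contra hne
           split_ifs at h with hc
           · exact hne (mem_singleton.mp h)
           · exact notMem_empty _ h
         · by_contra hc
           rw [if_neg hc] at h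
           exact notMem_empty _ h)
    rcases mem_union.mp hpU with h | h
    · have := hLb p h
      rcases hpE' with ⟨rfl, hc⟩ | ⟨rfl, hc⟩ <;> dsimp only at this <;> omega
    · have := hRb p h
      rcases hpE' with ⟨rfl, hc⟩ | ⟨rfl, hc⟩ <;> dsimp only at this <;> omega
  have hcE : (extras l k r).card = (if l + 2 ≤ k then 1 else 0) + (if k + 2 ≤ r then 1 else 0) := by
    unfold extras
    have hne : ((l, k) : ℕ × ℕ) ≠ (k, r) := by
      intro h
      have := congrArg Prod.fst h
      dsimp only at this
      omega
    split_ifs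
    · rw [card_union_of_disjoint (by simp [Prod.ext_iff]; omega)]; simp
    · simp
    · simp
    · simp
  rw [glue, card_union_of_disjoint hd2, card_union_of_disjoint hd1, hcE]

lemma glue_mem {l k r : ℕ} {L R : Finset (ℕ × ℕ)} (hk1 : l + 1 ≤ k) (hk2 : k + 1 ≤ r)
    (hL : L ∈ triangulations l k) (hR : R ∈ triangulations k r) :
    glue l k r L R ∈ triangulations l r := by
  have hLd : ∀ p ∈ L, l ≤ p.1 ∧ p.1 + 2 ≤ p.2 ∧ p.2 ≤ k ∧ ¬(p.1 = l ∧ p.2 = k) :=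
    fun p hp => diag_of_mem hL hp
  have hRd : ∀ p ∈ R, k ≤ p.1 ∧ p.1 + 2 ≤ p.2 ∧ p.2 ≤ r ∧ ¬(p.1 = k ∧ p.2 = r) :=
    fun p hp => diag_of_mem hR hp
  have hLc := (mem_triangulations.mp hL).2.2
  have hRc := (mem_triangulations.mp hR).2.2
  rw [mem_triangulations]
  refine ⟨?_, ?_, ?_⟩
  · intro p hp
    rw [mem_allDiags]
    unfold IsDiag
    rcases mem_glue.mp hp with h | h | ⟨rfl, h⟩ | ⟨rfl, h⟩
    · have := hLd p h; omega
    · have := hRd p h; omega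
    · dsimp only; omega
    · dsimp only; omega
  · rw [card_glue_aux hk1 hk2 (fun p hp => hLd p hp) (fun p hp => hRd p hp),
      (mem_triangulations.mp hL).2.1, (mem_triangulations.mp hR).2.1]
    split_ifs <;> omega
  · intro p hp q hq
    rcases mem_glue.mp hp with h1 | h1 | ⟨rfl, h1⟩ | ⟨rfl, h1⟩
    · rcases mem_glue.mp hq with h2 | h2 | ⟨rfl, h2⟩ | ⟨rfl, h2⟩
      · exact hLc _ h1 _ h2
      · have := hLd p h1; have := hRd q h2; unfold Crosses; omega
      · have := hLd p h1; unfold Crosses; dsimp only; omega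
      · have := hLd p h1; unfold Crosses; dsimp only; omega
    · rcases mem_glue.mp hq with h2 | h2 | ⟨rfl, h2⟩ | ⟨rfl, h2⟩
      · have := hRd p h1; have := hLd q h2; unfold Crosses; omega
      · exact hRc _ h1 _ h2
      · have := hRd p h1; unfold Crosses; dsimp only; omega
      · have := hRd p h1; unfold Crosses; dsimp only; omega
    · rcases mem_glue.mp hq with h2 | h2 | ⟨rfl, h2⟩ | ⟨rfl, h2⟩
      · have := hLd q h2; unfold Crosses; dsimp only; omega
      · have := hRd q h2; unfold Crosses; dsimp only; omega
      · unfold Crosses; dsimp only; omega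
      · unfold Crosses; dsimp only; omega
    · rcases mem_glue.mp hq with h2 | h2 | ⟨rfl, h2⟩ | ⟨rfl, h2⟩
      · have := hLd q h2; unfold Crosses; dsimp only; omega
      · have := hRd q h2; unfold Crosses; dsimp only; omega
      · unfold Crosses; dsimp only; omega
      · unfold Crosses; dsimp only; omega

lemma apex_lt {l r : ℕ} {T : Finset (ℕ × ℕ)} (hT : T ∈ triangulations l r)
    (h2 : l + 2 ≤ r) : apex l T < r := by
  rcases apex_cases l T with h | h
  · omega
  · have := diag_of_mem hT h
    dsimp only at this
    omega

lemma no_straddle {l r : ℕ} {T : Finset (ℕ × ℕ)} (hT : T ∈ triangulations l r) :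
    ∀ p ∈ T, p.2 ≤ apex l T ∨ apex l T ≤ p.1 := by
  intro p hp
  by_contra hc
  push_neg at hc
  have hd := diag_of_mem hT hp
  rcases apex_cases l T with h | h
  · have hp1 : p.1 = l := by omega
    have hpl : (l, p.2) ∈ T := by
      have : p = (l, p.2) := Prod.ext hp1 rfl
      rwa [← this]
    have := apex_le hpl
    omega
  · by_cases hp1 : p.1 = l
    · have hpl : (l, p.2) ∈ T := by
        have : p = (l, p.2) := Prod.ext hp1 rfl
        rwa [← this]
      have := apex_le hpl
      omega
    · have hcr := (mem_triangulations.mp hT).2.2 _ h _ hp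
      unfold Crosses at hcr
      dsimp only at hcr
      have hd2 := diag_of_mem hT h
      dsimp only at hd2
      omega

lemma leftPart_subset {l k : ℕ} {T : Finset (ℕ × ℕ)} : leftPart l k T ⊆ T :=
  fun p hp => mem_of_mem_filter p (mem_of_mem_erase hp)

lemma rightPart_subset {k r : ℕ} {T : Finset (ℕ × ℕ)} : rightPart k r T ⊆ T :=
  fun p hp => mem_of_mem_filter p (mem_of_mem_erase hp)

lemma mem_leftPart {l k : ℕ} {T : Finset (ℕ × ℕ)} {p : ℕ × ℕ} :
    p ∈ leftPart l k T ↔ p ≠ (l, k) ∧ p ∈ T ∧ p.2 ≤ k := by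
  unfold leftPart
  rw [mem_erase, mem_filter]

lemma mem_rightPart {k r : ℕ} {T : Finset (ℕ × ℕ)} {p : ℕ × ℕ} :
    p ∈ rightPart k r T ↔ p ≠ (k, r) ∧ p ∈ T ∧ k ≤ p.1 := by
  unfold rightPart
  rw [mem_erase, mem_filter]

lemma decompose {l r : ℕ} {T : Finset (ℕ × ℕ)} (hT : T ∈ triangulations l r)
    (h2 : l + 2 ≤ r) :
    leftPart l (apex l T) T ∈ triangulations l (apex l T) ∧
      rightPart (apex l T) r T ∈ triangulations (apex l T) r ∧
      glue l (apex l T) r (leftPart l (apex l T) T) (rightPart (apex l T) r T) = T := by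
  set k := apex l T with hk
  have hk1 : l + 1 ≤ k := le_apex
  have hkr : k < r := apex_lt hT h2
  have hcT := (mem_triangulations.mp hT).2.2
  have hcard : T.card = r - l - 2 := (mem_triangulations.mp hT).2.1
  have hLd : ∀ p ∈ leftPart l k T, IsDiag l k p.1 p.2 := by
    intro p hp
    rw [mem_leftPart] at hp
    have hd := diag_of_mem hT hp.2.1
    have hne : ¬(p.1 = l ∧ p.2 = k) := by
      intro ⟨h1, h3⟩
      exact hp.1 (Prod.ext h1 h3)
    unfold IsDiag
    omega
  have hRd : ∀ p ∈ rightPart k r T, IsDiag k r p.1 p.2 := by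
    intro p hp
    rw [mem_rightPart] at hp
    have hd := diag_of_mem hT hp.2.1
    have hne : ¬(p.1 = k ∧ p.2 = r) := by
      intro ⟨h1, h3⟩
      exact hp.1 (Prod.ext h1 h3)
    unfold IsDiag
    omega
  have hLc : ∀ p ∈ leftPart l k T, ∀ q ∈ leftPart l k T, ¬ Crosses p.1 p.2 q.1 q.2 :=
    fun p hp q hq => hcT p (leftPart_subset hp) q (leftPart_subset hq)
  have hRc : ∀ p ∈ rightPart k r T, ∀ q ∈ rightPart k r T, ¬ Crosses p.1 p.2 q.1 q.2 :=
    fun p hp q hq => hcT p (rightPart_subset hp) q (rightPart_subset hq)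
  have hLcard : (leftPart l k T).card ≤ k - l - 2 :=
    noncross_card_le _ l k _ le_rfl hLd hLc
  have hRcard : (rightPart k r T).card ≤ r - k - 2 :=
    noncross_card_le _ k r _ le_rfl hRd hRc
  -- the element (k, r) belongs to T when k + 2 ≤ r
  have hkrT : k + 2 ≤ r → (k, r) ∈ T := by
    intro hge
    by_contra hnot
    -- T is covered by filter-left and filter-right
    have hcov : T ⊆ (T.filter fun p => p.2 ≤ k) ∪ (T.filter fun p => k ≤ p.1) := by
      intro p hp
      rcases no_straddle hT p hp with h | h
      · exact mem_union_left _ (mem_filter.mpr ⟨hp, h⟩)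
      · exact mem_union_right _ (mem_filter.mpr ⟨hp, h⟩)
    have hL' : (T.filter fun p => p.2 ≤ k).card ≤ (leftPart l k T).card + 1 := by
      unfold leftPart
      by_cases hm : (l, k) ∈ (T.filter fun p => p.2 ≤ k)
      · rw [card_erase_of_mem hm]
        have := card_pos.mpr ⟨_, hm⟩
        omega
      · rw [erase_eq_of_notMem hm]
        omega
    have hR' : (T.filter fun p => k ≤ p.1) = rightPart k r T := by
      unfold rightPart
      rw [erase_eq_of_notMem]
      intro hm
      exact hnot (mem_of_mem_filter _ hm)
    have hcu := card_le_card hcov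
    have hcuu := card_union_le (T.filter fun p => p.2 ≤ k) (T.filter fun p => k ≤ p.1)
    rw [hR'] at hcu hcuu
    -- degenerate left case
    by_cases hlk : l + 2 ≤ k
    · omega
    · have hempty : (T.filter fun p => p.2 ≤ k) = ∅ := by
        refine eq_empty_of_forall_notMem fun p hp => ?_
        rw [mem_filter] at hp
        have := diag_of_mem hT hp.1
        omega
      rw [hempty] at hcu
      simp only [empty_union] at hcu
      omega
  have hlkT : l + 2 ≤ k → (l, k) ∈ T := by
    intro hge
    rcases apex_cases l T with h | h
    · omega
    · exact h
  have hglue : glue l k r (leftPart l k T) (rightPart k r T) = T := by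
    ext p
    rw [mem_glue, mem_leftPart, mem_rightPart]
    constructor
    · rintro (h | h | ⟨rfl, h⟩ | ⟨rfl, h⟩)
      · exact h.2.1
      · exact h.2.1
      · exact hlkT h
      · exact hkrT h
    · intro hp
      have hd := diag_of_mem hT hp
      rcases no_straddle hT p hp with h | h
      · by_cases hpe : p = (l, k)
        · right; right; left
          refine ⟨hpe, ?_⟩
          rw [hpe] at hd
          dsimp only at hd
          omega
        · exact Or.inl ⟨hpe, hp, h⟩
      · by_cases hpe : p = (k, r)
        · right; right; right
          refine ⟨hpe, ?_⟩
          rw [hpe] at hd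
          dsimp only at hd
          omega
        · exact Or.inr (Or.inl ⟨hpe, hp, h⟩)
  have hcards : (leftPart l k T).card = k - l - 2 ∧ (rightPart k r T).card = r - k - 2 := by
    have := card_glue_aux hk1 (by omega) hLd hRd
    rw [hglue, hcard] at this
    split_ifs at this <;> omega
  refine ⟨?_, ?_, hglue⟩
  · rw [mem_triangulations]
    exact ⟨fun p hp => mem_allDiags.mpr (hLd p hp), hcards.1, hLc⟩
  · rw [mem_triangulations]
    exact ⟨fun p hp => mem_allDiags.mpr (hRd p hp), hcards.2, hRc⟩

lemma apex_glue {l k r : ℕ} {L R : Finset (ℕ × ℕ)} (hk1 : l + 1 ≤ k) (hk2 : k + 1 ≤ r)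
    (hL : L ∈ triangulations l k) (hR : R ∈ triangulations k r) :
    apex l (glue l k r L R) = k := by
  apply le_antisymm
  · apply max'_le
    intro y hy
    rcases mem_insert.mp hy with rfl | hy
    · omega
    · obtain ⟨p, hp, rfl⟩ := mem_image.mp hy
      rw [mem_filter] at hp
      rcases mem_glue.mp hp.1 with h | h | ⟨he, h⟩ | ⟨he, h⟩
      · exact (diag_of_mem hL h).2.2.1
      · have := (diag_of_mem hR h).1
        omega
      · rw [he]
      · rw [he] at hp
        dsimp only at hp
        omega
  · by_cases h : l + 2 ≤ k
    · exact apex_le (mem_glue.mpr (Or.inr (Or.inr (Or.inl ⟨rfl, h⟩))))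
    · have : k = l + 1 := by omega
      rw [this]
      exact le_apex

lemma leftPart_glue {l k r : ℕ} {L R : Finset (ℕ × ℕ)} (hk1 : l + 1 ≤ k) (hk2 : k + 1 ≤ r)
    (hL : L ∈ triangulations l k) (hR : R ∈ triangulations k r) :
    leftPart l k (glue l k r L R) = L := by
  ext p
  rw [mem_leftPart]
  constructor
  · rintro ⟨hne, hp, hle⟩
    rcases mem_glue.mp hp with h | h | ⟨he, h⟩ | ⟨he, h⟩
    · exact h
    · have := diag_of_mem hR h
      omega
    · exact absurd he hne
    · rw [he] at hle
      dsimp only at hle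
      omega
  · intro hp
    have hd := diag_of_mem hL hp
    refine ⟨?_, mem_glue.mpr (Or.inl hp), hd.2.2.1⟩
    intro he
    rw [he] at hd
    dsimp only at hd
    omega

lemma rightPart_glue {l k r : ℕ} {L R : Finset (ℕ × ℕ)} (hk1 : l + 1 ≤ k) (hk2 : k + 1 ≤ r)
    (hL : L ∈ triangulations l k) (hR : R ∈ triangulations k r) :
    rightPart k r (glue l k r L R) = R := by
  ext p
  rw [mem_rightPart]
  constructor
  · rintro ⟨hne, hp, hle⟩
    rcases mem_glue.mp hp with h | h | ⟨he, h⟩ | ⟨he, h⟩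
    · have := diag_of_mem hL h
      omega
    · exact h
    · rw [he] at hle
      dsimp only at hle
      omega
    · exact absurd he hne
  · intro hp
    have hd := diag_of_mem hR hp
    refine ⟨?_, mem_glue.mpr (Or.inr (Or.inl hp)), hd.1⟩
    intro he
    rw [he] at hd
    dsimp only at hd
    omega

lemma sum_glue {M : Type*} [AddCommMonoid M] {l r : ℕ} (h2 : l + 2 ≤ r)
    (f : Finset (ℕ × ℕ) → M) :
    ∑ T ∈ triangulations l r, f T
      = ∑ k ∈ Ico (l + 1) r, ∑ L ∈ triangulations l k, ∑ R ∈ triangulations k r,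
          f (glue l k r L R) := by
  have : ∀ k ∈ Ico (l + 1) r, ∑ L ∈ triangulations l k, ∑ R ∈ triangulations k r,
      f (glue l k r L R)
      = ∑ p ∈ triangulations l k ×ˢ triangulations k r, f (glue l k r p.1 p.2) := by
    intro k _
    rw [Finset.sum_product]
  rw [Finset.sum_congr rfl this, Finset.sum_sigma']
  refine Finset.sum_nbij'
    (fun T => ⟨apex l T, (leftPart l (apex l T) T, rightPart (apex l T) r T)⟩)
    (fun x => glue l x.1 r x.2.1 x.2.2) ?_ ?_ ?_ ?_ ?_
  · intro T hT
    rw [mem_sigma, mem_product]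
    obtain ⟨h1, h2', _⟩ := decompose hT h2
    exact ⟨mem_Ico.mpr ⟨le_apex, apex_lt hT h2⟩, h1, h2'⟩
  · intro x hx
    rw [mem_sigma, mem_product] at hx
    obtain ⟨hk, hL, hR⟩ := hx
    rw [mem_Ico] at hk
    exact glue_mem hk.1 hk.2 hL hR
  · intro T hT
    exact (decompose hT h2).2.2
  · intro x hx
    rw [mem_sigma, mem_product] at hx
    obtain ⟨hk, hL, hR⟩ := hx
    rw [mem_Ico] at hk
    obtain ⟨k, L, R⟩ := x
    dsimp only at *
    have ha : apex l (glue l k r L R) = k := apex_glue hk.1 hk.2 hL hR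
    have hl : leftPart l (apex l (glue l k r L R)) (glue l k r L R) = L := by
      rw [ha]; exact leftPart_glue hk.1 hk.2 hL hR
    have hr : rightPart (apex l (glue l k r L R)) r (glue l k r L R) = R := by
      rw [ha]; exact rightPart_glue hk.1 hk.2 hL hR
    rw [Sigma.mk.inj_iff]
    refine ⟨ha, ?_⟩
    rw [hl, hr]
  · intro T hT
    exact (congrArg f (decompose hT h2).2.2).symm

lemma allDiags_small {l r : ℕ} (h : r ≤ l + 2) : allDiags l r = ∅ := by
  refine eq_empty_of_forall_notMem fun p hp => ?_
  have := mem_allDiags.mp hp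
  unfold IsDiag at this
  omega

lemma triangulations_small {l r : ℕ} (h2 : r ≤ l + 2) : triangulations l r = {∅} := by
  ext T
  rw [mem_triangulations, allDiags_small h2, mem_singleton, subset_empty]
  constructor
  · rintro ⟨rfl, -, -⟩; rfl
  · rintro rfl
    refine ⟨rfl, ?_, ?_⟩
    · rw [card_empty]; omega
    · intro p hp; exact absurd hp (notMem_empty p)

lemma catalan_conv (s n : ℕ) (h : s + 1 ≤ n) :
    ∑ k ∈ Ico s n, catalan (n - k - 1) * catalan (k - s) = catalan (n - s) := by
  obtain ⟨m, hm⟩ : ∃ m, n - s = m + 1 := ⟨n - s - 1, by omega⟩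
  rw [Finset.sum_Ico_eq_sum_range, hm]
  calc ∑ i ∈ range (m + 1), catalan (n - (s + i) - 1) * catalan (s + i - s)
      = ∑ i ∈ range (m + 1), catalan i * catalan (m - i) := by
        refine Finset.sum_congr rfl fun i hi => ?_
        rw [mem_range] at hi
        have h1 : s + i - s = i := by omega
        have h2 : n - (s + i) - 1 = m - i := by omega
        rw [h1, h2, mul_comm]
    _ = catalan (m + 1) := by
        rw [catalan_succ]
        exact (Fin.sum_univ_eq_sum_range (fun i => catalan i * catalan (m - i)) (m + 1)).symm

lemma card_triangulations : ∀ (d l r : ℕ), r - l ≤ d → l + 1 ≤ r →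
    (triangulations l r).card = catalan (r - l - 1) := by
  intro d
  induction d with
  | zero => intro l r h1 h2; exact absurd h1 (by omega)
  | succ d IH =>
    intro l r hd h1
    by_cases h2 : l + 2 ≤ r
    · rw [card_eq_sum_ones, sum_glue h2 (fun _ => 1)]
      have hstep : ∀ k ∈ Ico (l + 1) r, (∑ L ∈ triangulations l k, ∑ R ∈ triangulations k r,
          (1 : ℕ)) = catalan (r - k - 1) * catalan (k - (l + 1)) := by
        intro k hk
        rw [mem_Ico] at hk
        rw [Finset.sum_const, Finset.sum_const, smul_eq_mul, smul_eq_mul, mul_one,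
          IH l k (by omega) (by omega), IH k r (by omega) (by omega)]
        have e1 : k - l - 1 = k - (l + 1) := by omega
        rw [e1, mul_comm]
      rw [sum_congr rfl hstep, catalan_conv (l + 1) r (by omega)]
      congr 1
    · rw [triangulations_small (by omega)]
      have e : r - l - 1 = 0 := by omega
      rw [e, catalan_zero]
      simp

lemma mem_triangles {l r : ℕ} {T : Finset (ℕ × ℕ)} {t : ℕ × ℕ × ℕ} :
    t ∈ triangles l r T ↔ t.2.2 ≤ r ∧ t.1 < t.2.1 ∧ t.2.1 < t.2.2 ∧
      IsSide l r T t.1 t.2.1 ∧ IsSide l r T t.2.1 t.2.2 ∧ IsSide l r T t.1 t.2.2 := by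
  unfold triangles
  rw [mem_filter, mem_product, mem_product, mem_range, mem_range, mem_range]
  constructor
  · rintro ⟨⟨h1, h2, h3⟩, h4, h5, h6, h7, h8⟩
    exact ⟨by omega, h4, h5, h6, h7, h8⟩
  · rintro ⟨h1, h4, h5, h6, h7, h8⟩
    exact ⟨⟨by omega, by omega, by omega⟩, h4, h5, h6, h7, h8⟩

lemma triangle_fst {l r : ℕ} {T : Finset (ℕ × ℕ)} (hT : T ∈ triangulations l r)
    {t : ℕ × ℕ × ℕ} (ht : t ∈ triangles l r T) : l ≤ t.1 := by
  have h := (mem_triangles.mp ht).2.2.2.1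
  rcases h with h | h
  · unfold IsEdge at h
    omega
  · exact (diag_of_mem hT h).1

lemma degOne_eq {n : ℕ} {T : Finset (ℕ × ℕ)} (hT : T ∈ triangulations 1 n) :
    degOne n T = ((triangles 1 n T).filter fun t => t.1 = 1).card := by
  unfold degOne
  congr 1
  apply filter_congr
  intro t ht
  have h1 := triangle_fst hT ht
  have h2 := (mem_triangles.mp ht).2.1
  have h3 := (mem_triangles.mp ht).2.2.1
  constructor
  · rintro (h | h | h) <;> omega
  · intro h; exact Or.inl h

lemma side_lift {n k x y : ℕ} {L R : Finset (ℕ × ℕ)} (hk2 : 2 ≤ k) (hkn : k < n)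
    (hy : y ≤ k) (h : IsSide 1 k L x y) : IsSide 1 n (glue 1 k n L R) x y := by
  rcases h with h | h
  · rcases h with ⟨h1, h2, h3⟩ | ⟨h1, h2⟩
    · exact Or.inl (Or.inl ⟨h1, h2, by omega⟩)
    · -- x = 1, y = k
      by_cases hk3 : 3 ≤ k
      · right
        rw [h1, h2]
        exact mem_glue.mpr (Or.inr (Or.inr (Or.inl ⟨rfl, by omega⟩)))
      · left; left
        omega
  · exact Or.inr (mem_glue.mpr (Or.inl h))

lemma triangles_glue {n k : ℕ} {L R : Finset (ℕ × ℕ)} (hk2 : 2 ≤ k) (hkn : k < n)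
    (hL : L ∈ triangulations 1 k) (hR : R ∈ triangulations k n) :
    (triangles 1 n (glue 1 k n L R)).filter (fun t => t.1 = 1)
      = insert (1, (k, n)) ((triangles 1 k L).filter (fun t => t.1 = 1)) := by
  have hLd : ∀ p ∈ L, 1 ≤ p.1 ∧ p.1 + 2 ≤ p.2 ∧ p.2 ≤ k ∧ ¬(p.1 = 1 ∧ p.2 = k) :=
    fun p hp => diag_of_mem hL hp
  have hRd : ∀ p ∈ R, k ≤ p.1 ∧ p.1 + 2 ≤ p.2 ∧ p.2 ≤ n ∧ ¬(p.1 = k ∧ p.2 = n) :=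
    fun p hp => diag_of_mem hR hp
  ext t
  obtain ⟨a, b, c⟩ := t
  rw [mem_filter, mem_insert, mem_filter, mem_triangles, mem_triangles]
  dsimp only
  constructor
  · rintro ⟨⟨hcn, hab, hbc, s1, s2, s3⟩, rfl⟩
    -- b ≤ k
    have hbk : b ≤ k := by
      rcases s1 with h | h
      · unfold IsEdge at h
        omega
      · rcases mem_glue.mp h with h | h | ⟨he, hc⟩ | ⟨he, hc⟩
        · exact (hLd _ h).2.2.1
        · have := (hRd _ h).1
          dsimp only at this
          omega
        · rw [Prod.ext_iff] at he
          dsimp only at he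
          omega
        · rw [Prod.ext_iff] at he
          dsimp only at he
          omega
    by_cases hck : c ≤ k
    · right
      refine ⟨⟨hck, hab, hbc, ?_, ?_, ?_⟩, rfl⟩
      · -- IsSide 1 k L 1 b
        rcases s1 with h | h
        · left; unfold IsEdge at h ⊢; omega
        · rcases mem_glue.mp h with h | h | ⟨he, hc'⟩ | ⟨he, hc'⟩
          · exact Or.inr h
          · have := (hRd _ h).1
            dsimp only at this
            omega
          · rw [Prod.ext_iff] at he
            dsimp only at he
            omega
          · rw [Prod.ext_iff] at he
            dsimp only at he
            omega
      · -- IsSide 1 k L b c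
        rcases s2 with h | h
        · left; unfold IsEdge at h ⊢; omega
        · rcases mem_glue.mp h with h | h | ⟨he, hc'⟩ | ⟨he, hc'⟩
          · exact Or.inr h
          · have := (hRd _ h).1
            dsimp only at this
            omega
          · rw [Prod.ext_iff] at he
            dsimp only at he
            omega
          · rw [Prod.ext_iff] at he
            dsimp only at he
            omega
      · -- IsSide 1 k L 1 c
        rcases s3 with h | h
        · left; unfold IsEdge at h ⊢; omega
        · rcases mem_glue.mp h with h | h | ⟨he, hc'⟩ | ⟨he, hc'⟩
          · exact Or.inr h
          · have := (hRd _ h).1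
            dsimp only at this
            omega
          · -- (1, c) = (1, k) : closing edge of the small polygon
            rw [Prod.ext_iff] at he
            dsimp only at he
            left
            unfold IsEdge
            omega
          · rw [Prod.ext_iff] at he
            dsimp only at he
            omega
    · left
      -- c > k : the triangle must be (1, k, n)
      have hcn' : c = n := by
        rcases s3 with h | h
        · unfold IsEdge at h
          omega
        · rcases mem_glue.mp h with h | h | ⟨he, hc'⟩ | ⟨he, hc'⟩
          · have := (hLd _ h).2.2.1
            dsimp only at this
            omega
          · have := (hRd _ h).1
            dsimp only at this
            omega
          · rw [Prod.ext_iff] at he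
            dsimp only at he
            omega
          · rw [Prod.ext_iff] at he
            dsimp only at he
            omega
      have hbk' : b = k := by
        subst hcn'
        rcases s2 with h | h
        · unfold IsEdge at h
          omega
        · rcases mem_glue.mp h with h | h | ⟨he, hc'⟩ | ⟨he, hc'⟩
          · have := (hLd _ h).2.2.1
            dsimp only at this
            omega
          · have := hRd _ h
            dsimp only at this
            omega
          · rw [Prod.ext_iff] at he
            dsimp only at he
            omega
          · rw [Prod.ext_iff] at he
            dsimp only at he
            omega
      rw [Prod.ext_iff, Prod.ext_iff]
      exact ⟨rfl, hbk', hcn'⟩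
  · rintro (he | ⟨⟨hck, hab, hbc, s1, s2, s3⟩, ha⟩)
    · rw [Prod.ext_iff, Prod.ext_iff] at he
      dsimp only at he
      obtain ⟨ha, hb, hc⟩ := he
      rw [ha, hb, hc]
      refine ⟨⟨le_rfl, by omega, by omega, ?_, ?_, ?_⟩, rfl⟩
      · -- IsSide 1 n T 1 k
        by_cases hk3 : 3 ≤ k
        · exact Or.inr (mem_glue.mpr (Or.inr (Or.inr (Or.inl ⟨rfl, by omega⟩))))
        · left; left; omega
      · -- IsSide 1 n T k n
        by_cases hn3 : k + 2 ≤ n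
        · exact Or.inr (mem_glue.mpr (Or.inr (Or.inr (Or.inr ⟨rfl, by omega⟩))))
        · left; left; omega
      · -- IsSide 1 n T 1 n
        left; right; exact ⟨rfl, rfl⟩
    · subst ha
      exact ⟨⟨by omega, hab, hbc, side_lift hk2 hkn (by omega) s1,
        side_lift hk2 hkn (by omega) s2, side_lift hk2 hkn (by omega) s3⟩, rfl⟩

lemma degOne_glue {n k : ℕ} {L R : Finset (ℕ × ℕ)} (hk2 : 2 ≤ k) (hkn : k < n)
    (hL : L ∈ triangulations 1 k) (hR : R ∈ triangulations k n) :
    degOne n (glue 1 k n L R) = degOne k L + 1 := by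
  have hT : glue 1 k n L R ∈ triangulations 1 n :=
    glue_mem (by omega) (by omega) hL hR
  rw [degOne_eq hT, degOne_eq hL, triangles_glue hk2 hkn hL hR,
    card_insert_of_notMem, add_comm]
  intro hmem
  rw [mem_filter, mem_triangles] at hmem
  have : (((1 : ℕ), ((k : ℕ), (n : ℕ))) : ℕ × ℕ × ℕ).2.2 ≤ k := hmem.1.1
  dsimp only at this
  omega

lemma degOne_two : degOne 2 (∅ : Finset (ℕ × ℕ)) = 0 := by
  unfold degOne
  rw [card_eq_zero]
  refine eq_empty_of_forall_notMem fun t ht => ?_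
  rw [mem_filter, mem_triangles] at ht
  obtain ⟨⟨h1, h2, h3, s1, -, -⟩, -⟩ := ht
  rcases s1 with h | h
  · unfold IsEdge at h; omega
  · exact absurd h (notMem_empty _)

lemma conv1 (n : ℕ) (h : 3 ≤ n) :
    ∑ k ∈ Ico 2 n, ((catalan (n - k - 1) : ℚ) * catalan (k - 1))
      = (catalan (n - 1) : ℚ) - catalan (n - 2) := by
  have h0 := catalan_conv 1 n (by omega)
  rw [sum_eq_sum_Ico_succ_bot (show 1 < n by omega)] at h0
  have e1 : n - 1 - 1 = n - 2 := by omega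
  rw [e1] at h0
  norm_num at h0
  have hc := congrArg (Nat.cast : ℕ → ℚ) h0
  push_cast at hc
  linarith [hc]

lemma conv0 (n : ℕ) (h : 3 ≤ n) :
    ∑ k ∈ Ico 2 n, ((catalan (n - k - 1) : ℚ) * catalan k)
      = (catalan n : ℚ) - catalan (n - 1) - catalan (n - 2) := by
  have h0 := catalan_conv 0 n (by omega)
  rw [sum_eq_sum_Ico_succ_bot (show 0 < n by omega),
    sum_eq_sum_Ico_succ_bot (show 1 < n by omega)] at h0
  have e1 : n - 0 - 1 = n - 1 := by omega
  have e2 : n - 1 - 1 = n - 2 := by omega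
  have e3 : n - 0 = n := by omega
  rw [e1, e2, e3] at h0
  norm_num at h0
  have h0' : catalan (n - 1) + (catalan (n - 2) + ∑ k ∈ Ico 2 n,
      catalan (n - k - 1) * catalan (k - 0)) = catalan n := h0
  have hc := congrArg (Nat.cast : ℕ → ℚ) h0'
  push_cast at hc
  have he : ∀ k ∈ Ico 2 n, ((catalan (n - k - 1) : ℚ) * catalan (k - 0))
      = (catalan (n - k - 1) : ℚ) * catalan k := by
    intro k _
    norm_num
  rw [Finset.sum_congr rfl he] at hc
  linarith [hc]

lemma sum_degOne : ∀ n, 2 ≤ n →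
    ∑ T ∈ triangulations 1 n, (degOne n T : ℚ)
      = (catalan (n - 1) : ℚ) - catalan (n - 2) := by
  intro n
  induction n using Nat.strong_induction_on with
  | _ n IH =>
    intro hn
    by_cases h3 : 3 ≤ n
    · rw [sum_glue (show 1 + 2 ≤ n by omega) (fun T => (degOne n T : ℚ))]
      simp only [show (1 : ℕ) + 1 = 2 from rfl]
      have hstep : ∀ k ∈ Ico 2 n,
          (∑ L ∈ triangulations 1 k, ∑ R ∈ triangulations k n,
            (degOne n (glue 1 k n L R) : ℚ))
          = (catalan (n - k - 1) : ℚ) * catalan (k - 1) := by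
        intro k hk
        rw [mem_Ico] at hk
        have hR1 : ∀ L ∈ triangulations 1 k,
            ∑ R ∈ triangulations k n, (degOne n (glue 1 k n L R) : ℚ)
              = (catalan (n - k - 1) : ℚ) * ((degOne k L : ℚ) + 1) := by
          intro L hL
          calc ∑ R ∈ triangulations k n, (degOne n (glue 1 k n L R) : ℚ)
              = ∑ R ∈ triangulations k n, ((degOne k L : ℚ) + 1) := by
                refine Finset.sum_congr rfl fun R hR => ?_
                rw [degOne_glue hk.1 hk.2 hL hR]
                push_cast
                ring
            _ = (catalan (n - k - 1) : ℚ) * ((degOne k L : ℚ) + 1) := by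
                rw [Finset.sum_const, card_triangulations (n - k) k n le_rfl (by omega),
                  nsmul_eq_mul]
        rw [Finset.sum_congr rfl hR1, ← Finset.mul_sum]
        congr 1
        rw [Finset.sum_add_distrib, IH k (by omega) hk.1, Finset.sum_const,
          card_triangulations (k - 1) 1 k (by omega) (by omega), nsmul_eq_mul, mul_one]
        have e : k - 1 - 1 = k - 2 := by omega
        rw [e]
        ring
      rw [Finset.sum_congr rfl hstep, conv1 n h3]
    · have h2 : n = 2 := by omega
      subst h2
      rw [triangulations_small (by omega), sum_singleton, degOne_two]
      norm_num

lemma sum_degOne_sq : ∀ n, 2 ≤ n →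
    ∑ T ∈ triangulations 1 n, (degOne n T : ℚ) ^ 2
      = 2 * (catalan n : ℚ) - 5 * catalan (n - 1) + catalan (n - 2) := by
  intro n
  induction n using Nat.strong_induction_on with
  | _ n IH =>
    intro hn
    by_cases h3 : 3 ≤ n
    · rw [sum_glue (show 1 + 2 ≤ n by omega) (fun T => (degOne n T : ℚ) ^ 2)]
      simp only [show (1 : ℕ) + 1 = 2 from rfl]
      have hstep : ∀ k ∈ Ico 2 n,
          (∑ L ∈ triangulations 1 k, ∑ R ∈ triangulations k n,
            (degOne n (glue 1 k n L R) : ℚ) ^ 2)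
          = (catalan (n - k - 1) : ℚ) * (2 * catalan k - 3 * catalan (k - 1)) := by
        intro k hk
        rw [mem_Ico] at hk
        have hR1 : ∀ L ∈ triangulations 1 k,
            ∑ R ∈ triangulations k n, (degOne n (glue 1 k n L R) : ℚ) ^ 2
              = (catalan (n - k - 1) : ℚ) * ((degOne k L : ℚ) ^ 2 + 2 * degOne k L + 1) := by
          intro L hL
          calc ∑ R ∈ triangulations k n, (degOne n (glue 1 k n L R) : ℚ) ^ 2
              = ∑ R ∈ triangulations k n, ((degOne k L : ℚ) ^ 2 + 2 * degOne k L + 1) := by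
                refine Finset.sum_congr rfl fun R hR => ?_
                rw [degOne_glue hk.1 hk.2 hL hR]
                push_cast
                ring
            _ = (catalan (n - k - 1) : ℚ) * ((degOne k L : ℚ) ^ 2 + 2 * degOne k L + 1) := by
                rw [Finset.sum_const, card_triangulations (n - k) k n le_rfl (by omega),
                  nsmul_eq_mul]
        rw [Finset.sum_congr rfl hR1, ← Finset.mul_sum]
        congr 1
        rw [Finset.sum_add_distrib, Finset.sum_add_distrib, IH k (by omega) hk.1,
          ← Finset.mul_sum, sum_degOne k hk.1, Finset.sum_const,
          card_triangulations (k - 1) 1 k (by omega) (by omega), nsmul_eq_mul, mul_one]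
        have e : k - 1 - 1 = k - 2 := by omega
        rw [e]
        ring
      rw [Finset.sum_congr rfl hstep]
      have hsplit : ∀ k ∈ Ico 2 n,
          (catalan (n - k - 1) : ℚ) * (2 * catalan k - 3 * catalan (k - 1))
            = 2 * ((catalan (n - k - 1) : ℚ) * catalan k)
              - 3 * ((catalan (n - k - 1) : ℚ) * catalan (k - 1)) := by
        intro k _
        ring
      rw [Finset.sum_congr rfl hsplit, Finset.sum_sub_distrib, ← Finset.mul_sum,
        ← Finset.mul_sum, conv0 n h3, conv1 n h3]
      ring
    · have h2 : n = 2 := by omega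
      subst h2
      rw [triangulations_small (by omega), sum_singleton, degOne_two]
      norm_num [catalan_two]

lemma catalan_ratio (k : ℕ) : (k + 2) * catalan (k + 1) = 2 * (2 * k + 1) * catalan k := by
  have h1 := succ_mul_catalan_eq_centralBinom (k + 1)
  have h2 := Nat.succ_mul_centralBinom_succ k
  have h3 := succ_mul_catalan_eq_centralBinom k
  have key : (k + 1) * ((k + 2) * catalan (k + 1)) = (k + 1) * (2 * (2 * k + 1) * catalan k) := by
    calc (k + 1) * ((k + 2) * catalan (k + 1))
        = (k + 1) * ((k + 1 + 1) * catalan (k + 1)) := by ring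
      _ = (k + 1) * (k + 1).centralBinom := by rw [h1]
      _ = 2 * (2 * k + 1) * k.centralBinom := h2
      _ = 2 * (2 * k + 1) * ((k + 1) * catalan k) := by rw [h3]
      _ = (k + 1) * (2 * (2 * k + 1) * catalan k) := by ring
  exact Nat.eq_of_mul_eq_mul_left (by omega) key

lemma catalan_pos' (n : ℕ) : 0 < catalan n := by
  have h := succ_mul_catalan_eq_centralBinom n
  have hB := Nat.centralBinom_pos n
  by_contra hc
  push_neg at hc
  have hz : catalan n = 0 := by omega
  rw [hz, mul_zero] at h
  omega

/-- the variance of the number of triangles containing vertex `1` is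
`2(2n-3)(n-2)(n-3)/(n^2(n+1))` (Lemma 5(3)). -/
theorem degree_variance (n : ℕ) (hn : 3 ≤ n) :
    (∑ T ∈ triangulations 1 n, (degOne n T : ℚ) ^ 2) / (catalan (n - 2) : ℚ) -
        ((∑ T ∈ triangulations 1 n, (degOne n T : ℚ)) / (catalan (n - 2) : ℚ)) ^ 2 =
      2 * (2 * (n : ℚ) - 3) * ((n : ℚ) - 2) * ((n : ℚ) - 3) / ((n : ℚ) ^ 2 * ((n : ℚ) + 1)) := by
  obtain ⟨m, rfl⟩ : ∃ m, n = m + 3 := ⟨n - 3, by omega⟩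
  have e1 : m + 3 - 1 = m + 2 := by omega
  have e2 : m + 3 - 2 = m + 1 := by omega
  rw [sum_degOne_sq (m + 3) (by omega), sum_degOne (m + 3) (by omega), e1, e2]
  have hx : (0 : ℚ) < catalan (m + 1) := by exact_mod_cast catalan_pos' (m + 1)
  have hx' : (catalan (m + 1) : ℚ) ≠ 0 := ne_of_gt hx
  have r1 : ((m : ℚ) + 3) * catalan (m + 2) = 2 * (2 * m + 3) * catalan (m + 1) := by
    have h := congrArg (Nat.cast : ℕ → ℚ) (catalan_ratio (m + 1))
    push_cast at h
    linarith [h]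
  have r2 : ((m : ℚ) + 4) * catalan (m + 3) = 2 * (2 * m + 5) * catalan (m + 2) := by
    have h := congrArg (Nat.cast : ℕ → ℚ) (catalan_ratio (m + 2))
    push_cast at h
    linarith [h]
  have hy : (catalan (m + 2) : ℚ) = 2 * (2 * m + 3) * catalan (m + 1) / (m + 3) := by
    rw [eq_div_iff (by positivity)]
    linarith [r1]
  have hz : (catalan (m + 3) : ℚ) = 2 * (2 * m + 5) * catalan (m + 2) / (m + 4) := by
    rw [eq_div_iff (by positivity)]
    linarith [r2]
  rw [hz, hy]
  push_cast
  field_simp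
  ring
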